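/- arXiv:2404.04944 — 2 statements merged into one kernel-verified Lean document; each statement's English description precedes it below -/
import Mathlib

section
/- For any pair (i,k) with n−i+1 < k ≤ n and any n×n matrix X, the polynomial P_{ik}(X) = Σ_{j=i'}^{k} M_{ij}(X)·N_{jk}(X) satisfies P_{ik}(u⁻¹Xu) = P_{ik}(X) for every upper unitriangular matrix u. -/
open Matrix BigOperators

/-- Clamp a natural number into `Fin n` (identity on values `< n`). -/
def fidx (n : ℕ) (hn : 0 < n) (x : ℕ) : Fin n := ⟨x % n, Nat.mod_lt _ hn⟩

/-- `Dmin n hn k X` is the corner minor `D_k(X)`: determinant of the submatrix of `X`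
with rows `k, …, n` and columns `1, …, n-k+1` (1-based indexing). -/
def Dmin {R : Type*} [CommRing R] (n : ℕ) (hn : 0 < n) (k : ℕ)
    (X : Matrix (Fin n) (Fin n) R) : R :=
  (Matrix.of fun a b : Fin (n - k + 1) =>
    X (fidx n hn (k - 1 + a.val)) (fidx n hn b.val)).det

/-- `Mmin n hn i j X` is the minor `M_{ij}(X)` of order `i' = n-i+1`: rows `i, …, n`
and columns `1, …, i'-1` together with column `j` (1-based indexing). -/
def Mmin {R : Type*} [CommRing R] (n : ℕ) (hn : 0 < n) (i j : ℕ)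
    (X : Matrix (Fin n) (Fin n) R) : R :=
  (Matrix.of fun a b : Fin (n - i + 1) =>
    X (fidx n hn (i - 1 + a.val)) (fidx n hn (if b.val < n - i then b.val else j - 1))).det

/-- `Nmin n hn j k Y` is the minor `N_{jk}(Y)` of order `k' = n-k+1`: rows `j, k+1, …, n`
and columns `1, …, k'` (1-based indexing). -/
def Nmin {R : Type*} [CommRing R] (n : ℕ) (hn : 0 < n) (j k : ℕ)
    (Y : Matrix (Fin n) (Fin n) R) : R :=
  (Matrix.of fun a b : Fin (n - k + 1) =>
    Y (fidx n hn (if a.val = 0 then j - 1 else k + a.val - 1)) (fidx n hn b.val)).det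

/-- `Pmin n hn i k X Y = P_{ik}(X,Y) = Σ_{i' ≤ j ≤ k} M_{ij}(X) N_{jk}(Y)`. -/
def Pmin {R : Type*} [CommRing R] (n : ℕ) (hn : 0 < n) (i k : ℕ)
    (X Y : Matrix (Fin n) (Fin n) R) : R :=
  ∑ j ∈ Finset.Icc (n - i + 1) k, Mmin n hn i j X * Nmin n hn j k Y

/-- Upper unitriangular matrices: ones on the diagonal, zeros below it. -/
def IsUnitriangular {R : Type*} [CommRing R] {n : ℕ}
    (u : Matrix (Fin n) (Fin n) R) : Prop :=
  (∀ i, u i i = 1) ∧ ∀ i j : Fin n, j < i → u i j = 0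


section Aux

open Finset

variable {R : Type*} [CommRing R]

lemma fidx_val {n : ℕ} (hn : 0 < n) {x : ℕ} (hx : x < n) : fidx n hn x = ⟨x, hx⟩ := by
  simp [fidx, Nat.mod_eq_of_lt hx]

lemma fidx_self {n : ℕ} (hn : 0 < n) (t : Fin n) : fidx n hn t.val = t := by
  simp [fidx, Nat.mod_eq_of_lt t.isLt]

lemma det_updateRow_linear {m : ℕ} {ι : Type*} (A : Matrix (Fin m) (Fin m) R) (r : Fin m)
    (s : Finset ι) (c : ι → R) (v : ι → Fin m → R) :
    (A.updateRow r (∑ t ∈ s, c t • v t)).det = ∑ t ∈ s, c t * (A.updateRow r (v t)).det := by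
  classical
  induction s using Finset.induction_on with
  | empty =>
      simp only [Finset.sum_empty]
      exact Matrix.det_eq_zero_of_row_eq_zero r (by simp)
  | insert _ _ hk ih =>
      rw [Finset.sum_insert hk, Matrix.det_updateRow_add, Matrix.det_updateRow_smul, ih,
        Finset.sum_insert hk]

lemma det_updateCol_linear {m : ℕ} {ι : Type*} (A : Matrix (Fin m) (Fin m) R) (r : Fin m)
    (s : Finset ι) (c : ι → R) (v : ι → Fin m → R) :
    (A.updateCol r (∑ t ∈ s, c t • v t)).det
      = ∑ t ∈ s, c t * (A.updateCol r (v t)).det := by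
  rw [← Matrix.det_transpose, ← Matrix.updateRow_transpose,
    det_updateRow_linear A.transpose r s c v]
  simp [Matrix.updateRow_transpose, Matrix.det_transpose]

lemma det_submatrix_unitriangular {n m : ℕ} (u : Matrix (Fin n) (Fin n) R)
    (hu : IsUnitriangular u) (γ : Fin m → Fin n) (hγ : StrictMono γ) :
    (Matrix.of fun a b => u (γ a) (γ b)).det = 1 := by
  have h := Matrix.det_of_upperTriangular (M := (Matrix.of fun a b => u (γ a) (γ b)))
    (fun a b hab => hu.2 _ _ (hγ hab))
  rw [h]
  simp [hu.1]

lemma IsUnitriangular.det_eq_one {n : ℕ} {u : Matrix (Fin n) (Fin n) R}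
    (hu : IsUnitriangular u) : u.det = 1 := by
  have h := Matrix.det_of_upperTriangular (M := u) (fun a b hab => hu.2 _ _ hab)
  rw [h]
  simp [hu.1]

lemma IsUnitriangular.inv {K : Type*} [Field K] {n : ℕ} {u : Matrix (Fin n) (Fin n) K}
    (hu : IsUnitriangular u) : IsUnitriangular u⁻¹ := by
  have hdet : IsUnit u.det := by simp [hu.det_eq_one]
  have : Invertible u := u.invertibleOfIsUnitDet hdet
  have htri : u⁻¹.BlockTriangular id :=
    Matrix.blockTriangular_inv_of_blockTriangular (fun a b hab => hu.2 _ _ hab)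
  have hlow : ∀ a b : Fin n, b < a → u⁻¹ a b = 0 := fun a b hab => htri hab
  refine ⟨fun s => ?_, hlow⟩
  have h1 : (u * u⁻¹) s s = 1 := by rw [Matrix.mul_nonsing_inv u hdet]; simp
  rw [Matrix.mul_apply] at h1
  rw [Finset.sum_eq_single s (fun t _ hts => ?_) (by simp)] at h1
  · rw [hu.1 s, one_mul] at h1; exact h1
  · rcases lt_or_gt_of_ne hts with h | h
    · rw [hu.2 s t h, zero_mul]
    · rw [hlow t s h, mul_zero]

lemma mul_submatrix_left {n m : ℕ} (u' X : Matrix (Fin n) (Fin n) R)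
    (r c : Fin m → Fin n) (hr : Function.Injective r)
    (hcl : ∀ (a : Fin m) (t : Fin n), u' (r a) t ≠ 0 → ∃ a', r a' = t) :
    (Matrix.of fun a b => (u' * X) (r a) (c b))
      = (Matrix.of fun a a' => u' (r a) (r a')) * (Matrix.of fun a' b => X (r a') (c b)) := by
  ext a b
  simp only [Matrix.mul_apply, Matrix.of_apply]
  rw [← Finset.sum_image (s := Finset.univ) (g := r)
    (f := fun t => u' (r a) t * X t (c b)) (fun x _ y _ h => hr h)]
  refine (Finset.sum_subset (Finset.subset_univ _) fun t _ ht => ?_).symm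
  rcases eq_or_ne (u' (r a) t) 0 with h | h
  · rw [h, zero_mul]
  · obtain ⟨a', ha'⟩ := hcl a t h
    exact absurd (Finset.mem_image.2 ⟨a', Finset.mem_univ _, ha'⟩) ht

lemma mul_submatrix_right {n m : ℕ} (X u' : Matrix (Fin n) (Fin n) R)
    (r c : Fin m → Fin n) (hc : Function.Injective c)
    (hcl : ∀ (b : Fin m) (t : Fin n), u' t (c b) ≠ 0 → ∃ b', c b' = t) :
    (Matrix.of fun a b => (X * u') (r a) (c b))
      = (Matrix.of fun a b' => X (r a) (c b')) * (Matrix.of fun b' b => u' (c b') (c b)) := by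
  ext a b
  simp only [Matrix.mul_apply, Matrix.of_apply]
  rw [← Finset.sum_image (s := Finset.univ) (g := c)
    (f := fun t => X (r a) t * u' t (c b)) (fun x _ y _ h => hc h)]
  refine (Finset.sum_subset (Finset.subset_univ _) fun t _ ht => ?_).symm
  rcases eq_or_ne (u' t (c b)) 0 with h | h
  · rw [h, mul_zero]
  · obtain ⟨b', hb'⟩ := hcl b t h
    exact absurd (Finset.mem_image.2 ⟨b', Finset.mem_univ _, hb'⟩) ht

end Aux


section MainLemmas

open Finset

variable {R : Type*} [CommRing R]

/-- helper: sum over Fin n as sum over range n through fidx -/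
lemma sum_fin_eq_range {n : ℕ} (hn : 0 < n) (f : Fin n → R) :
    ∑ t : Fin n, f t = ∑ s ∈ Finset.range n, f (fidx n hn s) := by
  rw [← Fin.sum_univ_eq_sum_range (fun s => f (fidx n hn s)) n]
  exact Finset.sum_congr rfl (fun t _ => by rw [fidx_self])

lemma Mmin_mul_left {n : ℕ} (hn : 0 < n) {i j : ℕ} (hi : 1 ≤ i) (hin : i ≤ n)
    (hj1 : 1 ≤ j) (hjn : j ≤ n) (w X : Matrix (Fin n) (Fin n) R)
    (hw : IsUnitriangular w) :
    Mmin n hn i j (w * X) = Mmin n hn i j X := by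
  set r : Fin (n - i + 1) → Fin n := fun a => fidx n hn (i - 1 + a.1) with hr
  set γ : Fin (n - i + 1) → Fin n :=
    fun b => fidx n hn (if b.1 < n - i then b.1 else j - 1) with hγ
  have hrval : ∀ a : Fin (n - i + 1), (r a).1 = i - 1 + a.1 := fun a => by
    have := a.isLt
    exact Nat.mod_eq_of_lt (by omega)
  have hrmono : StrictMono r := fun a a' h => by
    rw [Fin.lt_def, hrval, hrval]
    exact Nat.add_lt_add_left h _
  have hM : ∀ Y : Matrix (Fin n) (Fin n) R,
      Mmin n hn i j Y = (Matrix.of fun a b => Y (r a) (γ b)).det := fun Y => rfl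
  rw [hM, hM, mul_submatrix_left w X r γ hrmono.injective (fun a t ht => ?_), Matrix.det_mul,
    det_submatrix_unitriangular w hw r hrmono, one_mul]
  by_contra hc
  push_neg at hc
  have hlt : t.1 < i - 1 + 0 ∨ True := Or.inr trivial
  have h1 : i - 1 ≤ t.1 := by
    by_contra h
    push_neg at h
    exact ht (hw.2 _ _ (by rw [Fin.lt_def, hrval]; omega))
  have h2 : t.1 - (i - 1) < n - i + 1 := by have := t.isLt; omega
  exact (hc ⟨t.1 - (i - 1), h2⟩ (by
    apply Fin.ext
    rw [hrval]
    show i - 1 + (t.1 - (i - 1)) = t.1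
    omega)).elim

lemma Nmin_mul_right {n : ℕ} (hn : 0 < n) {j k : ℕ} (hj1 : 1 ≤ j) (hjn : j ≤ n)
    (hk1 : 1 ≤ k) (hkn : k ≤ n) (Y u : Matrix (Fin n) (Fin n) R)
    (hu : IsUnitriangular u) :
    Nmin n hn j k (Y * u) = Nmin n hn j k Y := by
  set ρ : Fin (n - k + 1) → Fin n :=
    fun a => fidx n hn (if a.1 = 0 then j - 1 else k + a.1 - 1) with hρ
  set γ : Fin (n - k + 1) → Fin n := fun b => fidx n hn b.1 with hγ
  have hγval : ∀ b : Fin (n - k + 1), (γ b).1 = b.1 := fun b => by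
    have := b.isLt
    exact Nat.mod_eq_of_lt (by omega)
  have hγmono : StrictMono γ := fun b b' h => by
    rw [Fin.lt_def, hγval, hγval]; exact h
  have hN : ∀ Z : Matrix (Fin n) (Fin n) R,
      Nmin n hn j k Z = (Matrix.of fun a b => Z (ρ a) (γ b)).det := fun Z => rfl
  rw [hN, hN, mul_submatrix_right Y u ρ γ hγmono.injective (fun b t ht => ?_), Matrix.det_mul,
    det_submatrix_unitriangular u hu γ hγmono, mul_one]
  have h1 : t.1 ≤ b.1 := by
    by_contra h
    push_neg at h
    exact ht (hu.2 _ _ (by rw [Fin.lt_def, hγval]; omega))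
  have h2 : t.1 < n - k + 1 := lt_of_le_of_lt h1 b.isLt
  exact ⟨⟨t.1, h2⟩, by apply Fin.ext; rw [hγval]⟩

end MainLemmas


lemma Nmin_mul_left {n : ℕ} (hn : 0 < n) {j k : ℕ} (hj1 : 1 ≤ j) (hjk : j ≤ k) (hkn : k ≤ n)
    {R : Type*} [CommRing R] (w Y : Matrix (Fin n) (Fin n) R) (hw : IsUnitriangular w) :
    Nmin n hn j k (w * Y)
      = ∑ b ∈ Finset.Icc j k, w (fidx n hn (j - 1)) (fidx n hn (b - 1)) * Nmin n hn b k Y := by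
  set ρ : Fin (n - k + 1) → Fin n :=
    fun a => fidx n hn (if a.1 = 0 then j - 1 else k + a.1 - 1) with hρ
  set γ : Fin (n - k + 1) → Fin n := fun b => fidx n hn b.1 with hγ
  have hρval : ∀ a : Fin (n - k + 1), (ρ a).1 = if a.1 = 0 then j - 1 else k + a.1 - 1 := by
    intro a
    have := a.isLt
    show (if a.1 = 0 then j - 1 else k + a.1 - 1) % n = _
    rcases Nat.eq_zero_or_pos a.1 with h | h
    · rw [if_pos h]; exact Nat.mod_eq_of_lt (by omega)
    · rw [if_neg (by omega)]; exact Nat.mod_eq_of_lt (by omega)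
  have hρ0 : (ρ 0).1 = j - 1 := by rw [hρval]; simp
  have hρsucc : ∀ a : Fin (n - k), (ρ a.succ).1 = k + a.1 := by
    intro a
    rw [hρval]
    simp only [Fin.val_succ]
    rw [if_neg (by omega)]
    omega
  have hρmono : StrictMono ρ := by
    intro a a' h
    rw [Fin.lt_def, hρval, hρval]
    rcases Nat.eq_zero_or_pos a.1 with h0 | h0
    · rw [if_pos h0, if_neg (by omega)]
      have : 1 ≤ a'.1 := by omega
      omega
    · rw [if_neg (by omega), if_neg (by omega)]
      have := Fin.lt_def.mp h
      omega
  -- the coefficient and replaced-row vectors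
  set c : ℕ → R := fun t => w (fidx n hn (j - 1)) (fidx n hn t) with hc
  set v : ℕ → Fin (n - k + 1) → R := fun t b => Y (fidx n hn t) (γ b) with hv
  set Z₀ : Matrix (Fin (n - k + 1)) (Fin (n - k + 1)) R :=
    Matrix.of fun a b => Y (ρ a) (γ b) with hZ₀
  set Z := Z₀.updateRow 0 (∑ t ∈ Finset.Ico (j - 1) k, c t • v t) with hZ
  set V : Matrix (Fin (n - k + 1)) (Fin (n - k + 1)) R :=
    Matrix.of fun a a' => w (ρ a) (ρ a') with hV
  have claim1 : (Matrix.of fun a b => (w * Y) (ρ a) (γ b)) = V * Z := by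
    ext a b
    rw [Matrix.of_apply, Matrix.mul_apply, Matrix.mul_apply, Fin.sum_univ_succ]
    have hZ0b : Z 0 b = ∑ t ∈ Finset.Ico (j - 1) k, c t * v t b := by
      rw [hZ, Matrix.updateRow_self, Finset.sum_apply]
      exact Finset.sum_congr rfl (fun t _ => by simp)
    have hZsucc : ∀ a' : Fin (n - k), Z a'.succ b = Y (ρ a'.succ) (γ b) := by
      intro a'
      rw [hZ, Matrix.updateRow_ne (Fin.succ_ne_zero a')]
      rfl
    have htail : ∑ a' : Fin (n - k), V a a'.succ * Z a'.succ b
        = ∑ s ∈ Finset.Ico k n, w (ρ a) (fidx n hn s) * Y (fidx n hn s) (γ b) := by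
      rw [Finset.sum_Ico_eq_sum_range, ← Fin.sum_univ_eq_sum_range
        (fun s => w (ρ a) (fidx n hn (k + s)) * Y (fidx n hn (k + s)) (γ b)) (n - k)]
      refine Finset.sum_congr rfl (fun a' _ => ?_)
      have : ρ a'.succ = fidx n hn (k + a'.1) := by
        apply Fin.ext
        rw [hρsucc]
        exact (Nat.mod_eq_of_lt (by have := a'.isLt; omega)).symm
      rw [hV, Matrix.of_apply, hZsucc, this]
    rw [htail, hZ0b, sum_fin_eq_range hn, Finset.range_eq_Ico,
      ← Finset.sum_Ico_consecutive _ (Nat.zero_le k) hkn]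
    rcases Nat.eq_zero_or_pos a.1 with h0 | h0
    · -- row 0
      have ha0 : a = 0 := Fin.ext h0
      have hV00 : V a 0 = 1 := by
        rw [hV, ha0, Matrix.of_apply]
        have : ρ 0 = ρ 0 := rfl
        exact hw.1 _
      rw [hV00, one_mul, ha0]
      have hsplit : ∑ s ∈ Finset.Ico 0 k, w (ρ 0) (fidx n hn s) * Y (fidx n hn s) (γ b)
          = ∑ s ∈ Finset.Ico (j - 1) k, c s * v s b := by
        rw [← Finset.sum_Ico_consecutive _ (Nat.zero_le (j - 1)) (by omega)]
        have hzero : ∑ s ∈ Finset.Ico 0 (j - 1), w (ρ 0) (fidx n hn s) * Y (fidx n hn s) (γ b)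
            = 0 := by
          refine Finset.sum_eq_zero (fun s hs => ?_)
          rw [Finset.mem_Ico] at hs
          have : (fidx n hn s) < ρ 0 := by
            rw [Fin.lt_def, hρ0]
            show s % n < j - 1
            rw [Nat.mod_eq_of_lt (by omega)]
            omega
          rw [hw.2 _ _ this, zero_mul]
        rw [hzero, zero_add]
        refine Finset.sum_congr rfl (fun s hs => ?_)
        rfl
      rw [← hsplit, add_comm]
    · -- rows below
      have hV0 : V a 0 = 0 := by
        rw [hV, Matrix.of_apply]
        refine hw.2 _ _ ?_
        rw [Fin.lt_def, hρ0, hρval, if_neg (by omega)]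
        omega
      rw [hV0, zero_mul, zero_add]
      have hzero : ∑ s ∈ Finset.Ico 0 k, w (ρ a) (fidx n hn s) * Y (fidx n hn s) (γ b) = 0 := by
        refine Finset.sum_eq_zero (fun s hs => ?_)
        rw [Finset.mem_Ico] at hs
        have : (fidx n hn s) < ρ a := by
          rw [Fin.lt_def, hρval, if_neg (by omega)]
          show s % n < k + a.1 - 1
          rw [Nat.mod_eq_of_lt (by omega)]
          omega
        rw [hw.2 _ _ this, zero_mul]
      rw [hzero, zero_add]
  have hV1 : V.det = 1 := det_submatrix_unitriangular w hw ρ hρmono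
  have hNlhs : Nmin n hn j k (w * Y) = (Matrix.of fun a b => (w * Y) (ρ a) (γ b)).det := rfl
  rw [hNlhs, claim1, Matrix.det_mul, hV1, one_mul, hZ,
    det_updateRow_linear Z₀ 0 (Finset.Ico (j - 1) k) c v]
  refine Finset.sum_bij' (fun t _ => t + 1) (fun b _ => b - 1) ?_ ?_ ?_ ?_ ?_
  · intro t ht
    simp only [Finset.mem_Ico] at ht
    simp only [Finset.mem_Icc]
    omega
  · intro b hb
    simp only [Finset.mem_Icc] at hb
    simp only [Finset.mem_Ico]
    omega
  · intro t ht
    show t + 1 - 1 = t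
    omega
  · intro b hb
    simp only [Finset.mem_Icc] at hb
    show b - 1 + 1 = b
    omega
  · intro t ht'
    have ht : j - 1 ≤ t ∧ t < k := Finset.mem_Ico.mp ht'
    have halt : ∀ a : Fin (n - k + 1), a.1 < n - k + 1 := fun a => a.isLt
    show c t * (Z₀.updateRow 0 (v t)).det
        = w (fidx n hn (j - 1)) (fidx n hn (t + 1 - 1)) * Nmin n hn (t + 1) k Y
    have hdet : Z₀.updateRow 0 (v t) = Matrix.of fun a b =>
        Y (fidx n hn (if a.1 = 0 then (t + 1) - 1 else k + a.1 - 1)) (fidx n hn b.1) := by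
      ext a b
      rcases Nat.eq_zero_or_pos a.1 with h0 | h0
      · have ha0 : a = 0 := Fin.ext h0
        rw [ha0, Matrix.updateRow_self, Matrix.of_apply, if_pos (by simp)]
        rfl
      · have hne : a ≠ 0 := by intro hh; rw [hh] at h0; simp at h0
        rw [Matrix.updateRow_ne hne]
        show Y (ρ a) (γ b) = _
        rw [Matrix.of_apply, if_neg (by omega)]
        congr 1
        apply Fin.ext
        rw [hρval, if_neg (by omega)]
        have := a.isLt
        exact (Nat.mod_eq_of_lt (by omega)).symm
    rw [hdet]
    rfl



lemma Mmin_mul_right {n : ℕ} (hn : 0 < n) {i j : ℕ} (hi : 1 ≤ i) (hin : i ≤ n)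
    (hj : n - i + 1 ≤ j) (hjn : j ≤ n)
    {R : Type*} [CommRing R] (Y u : Matrix (Fin n) (Fin n) R) (hu : IsUnitriangular u) :
    Mmin n hn i j (Y * u)
      = ∑ c ∈ Finset.Icc (n - i + 1) j,
          u (fidx n hn (c - 1)) (fidx n hn (j - 1)) * Mmin n hn i c Y := by
  set r : Fin (n - i + 1) → Fin n := fun a => fidx n hn (i - 1 + a.1) with hr
  set γ : Fin (n - i + 1) → Fin n :=
    fun b => fidx n hn (if b.1 < n - i then b.1 else j - 1) with hγ
  have hγval : ∀ b : Fin (n - i + 1), (γ b).1 = if b.1 < n - i then b.1 else j - 1 := by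
    intro b
    have := b.isLt
    show (if b.1 < n - i then b.1 else j - 1) % n = _
    rcases lt_or_ge b.1 (n - i) with h | h
    · rw [if_pos h]; exact Nat.mod_eq_of_lt (by omega)
    · rw [if_neg (by omega)]; exact Nat.mod_eq_of_lt (by omega)
  have hγlast : (γ (Fin.last (n - i))).1 = j - 1 := by
    rw [hγval]
    simp
  have hγcast : ∀ b : Fin (n - i), (γ b.castSucc).1 = b.1 := by
    intro b
    rw [hγval]
    simp only [Fin.coe_castSucc]
    rw [if_pos b.isLt]
  have hγmono : StrictMono γ := by
    intro b b' h
    have hlt := Fin.lt_def.mp h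
    have hb' := b'.isLt
    rw [Fin.lt_def, hγval, hγval]
    rcases lt_or_ge b'.1 (n - i) with h1 | h1
    · rw [if_pos (show b.1 < n - i by omega), if_pos h1]; omega
    · rw [if_pos (show b.1 < n - i by omega), if_neg (show ¬ b'.1 < n - i by omega)]; omega
  set c' : ℕ → R := fun t => u (fidx n hn t) (fidx n hn (j - 1)) with hc'
  set v' : ℕ → Fin (n - i + 1) → R := fun t a => Y (r a) (fidx n hn t) with hv'
  set Z₀ : Matrix (Fin (n - i + 1)) (Fin (n - i + 1)) R :=
    Matrix.of fun a b => Y (r a) (γ b) with hZ₀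
  set Z := Z₀.updateCol (Fin.last (n - i)) (∑ t ∈ Finset.Ico (n - i) j, c' t • v' t) with hZ
  set W : Matrix (Fin (n - i + 1)) (Fin (n - i + 1)) R :=
    Matrix.of fun b' b => u (γ b') (γ b) with hW
  have claim1 : (Matrix.of fun a b => (Y * u) (r a) (γ b)) = Z * W := by
    ext a b
    rw [Matrix.of_apply, Matrix.mul_apply, Matrix.mul_apply, Fin.sum_univ_castSucc]
    have hZlast : Z a (Fin.last (n - i)) = ∑ t ∈ Finset.Ico (n - i) j, c' t * v' t a := by
      rw [hZ, Matrix.updateCol_self, Finset.sum_apply]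
      exact Finset.sum_congr rfl (fun t _ => by simp)
    have hZcast : ∀ b' : Fin (n - i), Z a b'.castSucc = Y (r a) (γ b'.castSucc) := by
      intro b'
      rw [hZ, Matrix.updateCol_ne (Fin.castSucc_lt_last b').ne]
      rfl
    have hhead : ∑ b' : Fin (n - i), Z a b'.castSucc * W b'.castSucc b
        = ∑ s ∈ Finset.Ico 0 (n - i), Y (r a) (fidx n hn s) * u (fidx n hn s) (γ b) := by
      rw [← Finset.range_eq_Ico, ← Fin.sum_univ_eq_sum_range
        (fun s => Y (r a) (fidx n hn s) * u (fidx n hn s) (γ b)) (n - i)]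
      refine Finset.sum_congr rfl (fun b' _ => ?_)
      have hgb : γ b'.castSucc = fidx n hn b'.1 := by
        apply Fin.ext
        rw [hγcast]
        exact (Nat.mod_eq_of_lt (by have := b'.isLt; omega)).symm
      rw [hZcast, hW, Matrix.of_apply, hgb]
    rw [hhead, hZlast, sum_fin_eq_range hn, Finset.range_eq_Ico,
      ← Finset.sum_Ico_consecutive _ (Nat.zero_le (n - i)) (by omega : n - i ≤ n)]
    rcases lt_or_ge b.1 (n - i) with h0 | h0
    · -- not the last column
      have hWlb : W (Fin.last (n - i)) b = 0 := by
        rw [hW, Matrix.of_apply]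
        refine hu.2 _ _ ?_
        rw [Fin.lt_def, hγlast, hγval, if_pos h0]
        omega
      rw [hWlb, mul_zero, add_zero]
      have hzero : ∑ s ∈ Finset.Ico (n - i) n, Y (r a) (fidx n hn s) * u (fidx n hn s) (γ b)
          = 0 := by
        refine Finset.sum_eq_zero (fun s hs => ?_)
        rw [Finset.mem_Ico] at hs
        have : (γ b) < fidx n hn s := by
          rw [Fin.lt_def, hγval, if_pos h0]
          show b.1 < s % n
          rw [Nat.mod_eq_of_lt (by omega)]
          omega
        rw [hu.2 _ _ this, mul_zero]
      rw [hzero, add_zero]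
    · -- the last column
      have hbl : b = Fin.last (n - i) := by
        apply Fin.ext
        have := b.isLt
        rw [Fin.val_last]
        omega
      have hWll : W (Fin.last (n - i)) b = 1 := by
        rw [hW, Matrix.of_apply, hbl]
        exact hu.1 _
      rw [hWll, mul_one, hbl]
      rw [← Finset.sum_Ico_consecutive _ (by omega : n - i ≤ j) (by omega : j ≤ n)]
      have hzero : ∑ s ∈ Finset.Ico j n, Y (r a) (fidx n hn s) * u (fidx n hn s)
          (γ (Fin.last (n - i))) = 0 := by
        refine Finset.sum_eq_zero (fun s hs => ?_)
        rw [Finset.mem_Ico] at hs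
        have : (γ (Fin.last (n - i))) < fidx n hn s := by
          rw [Fin.lt_def, hγlast]
          show j - 1 < s % n
          rw [Nat.mod_eq_of_lt (by omega)]
          omega
        rw [hu.2 _ _ this, mul_zero]
      rw [hzero, add_zero]
      congr 1
      refine Finset.sum_congr rfl (fun s hs => ?_)
      rw [Finset.mem_Ico] at hs
      have : γ (Fin.last (n - i)) = fidx n hn (j - 1) := by
        apply Fin.ext
        rw [hγlast]
        exact (Nat.mod_eq_of_lt (by omega)).symm
      rw [this, hc', hv']
      ring
  have hW1 : W.det = 1 := det_submatrix_unitriangular u hu γ hγmono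
  have hMlhs : Mmin n hn i j (Y * u) = (Matrix.of fun a b => (Y * u) (r a) (γ b)).det := rfl
  rw [hMlhs, claim1, Matrix.det_mul, hW1, mul_one, hZ,
    det_updateCol_linear Z₀ (Fin.last (n - i)) (Finset.Ico (n - i) j) c' v']
  refine Finset.sum_bij' (fun t _ => t + 1) (fun b _ => b - 1) ?_ ?_ ?_ ?_ ?_
  · intro t ht
    simp only [Finset.mem_Ico] at ht
    simp only [Finset.mem_Icc]
    omega
  · intro b hb
    simp only [Finset.mem_Icc] at hb
    simp only [Finset.mem_Ico]
    omega
  · intro t ht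
    show t + 1 - 1 = t
    omega
  · intro b hb
    simp only [Finset.mem_Icc] at hb
    show b - 1 + 1 = b
    omega
  · intro t ht'
    have ht : n - i ≤ t ∧ t < j := Finset.mem_Ico.mp ht'
    show c' t * (Z₀.updateCol (Fin.last (n - i)) (v' t)).det
        = u (fidx n hn (t + 1 - 1)) (fidx n hn (j - 1)) * Mmin n hn i (t + 1) Y
    have hdet : Z₀.updateCol (Fin.last (n - i)) (v' t) = Matrix.of fun a b =>
        Y (fidx n hn (i - 1 + a.1))
          (fidx n hn (if b.1 < n - i then b.1 else (t + 1) - 1)) := by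
      ext a b
      rcases lt_or_ge b.1 (n - i) with h0 | h0
      · have hne : b ≠ Fin.last (n - i) := by
          intro hh
          rw [hh, Fin.val_last] at h0
          omega
        rw [Matrix.updateCol_ne hne]
        show Y (r a) (γ b) = _
        rw [Matrix.of_apply, if_pos h0]
        congr 1
        apply Fin.ext
        rw [hγval, if_pos h0]
        exact (Nat.mod_eq_of_lt (by omega)).symm
      · have hbl : b = Fin.last (n - i) := by
          apply Fin.ext
          have := b.isLt
          rw [Fin.val_last]
          omega
        rw [hbl, Matrix.updateCol_self, Matrix.of_apply, if_neg (by omega)]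
        rfl
    rw [hdet]
    rfl

/-- the polynomials `P_{ik}(X) = P_{ik}(X,X)` (for `i' < k ≤ n`) are invariant
under conjugation by an upper unitriangular matrix. -/
theorem Pmin_diag_unitriangular_invariant {K : Type*} [Field K] (n : ℕ) (hn : 0 < n)
    (i k : ℕ) (hi : 1 ≤ i) (hin : i ≤ n) (hik : n - i + 1 < k) (hkn : k ≤ n)
    (X u : Matrix (Fin n) (Fin n) K) (hu : IsUnitriangular u) :
    Pmin n hn i k (u⁻¹ * X * u) (u⁻¹ * X * u) = Pmin n hn i k X X := by
  have hud : IsUnit u.det := by simp [hu.det_eq_one]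
  have hw : IsUnitriangular u⁻¹ := hu.inv
  have hOne : u * u⁻¹ = 1 := Matrix.mul_nonsing_inv u hud
  have hk1 : 1 ≤ k := by omega
  set M : ℕ → K := fun c => Mmin n hn i c X with hM
  set N : ℕ → K := fun b => Nmin n hn b k X with hN
  -- fidx comparison helper
  have hflt : ∀ {s t : ℕ}, s < t → t < n → fidx n hn s < fidx n hn t := by
    intro s t hst htn
    rw [Fin.lt_def]
    show s % n < t % n
    rw [Nat.mod_eq_of_lt (by omega), Nat.mod_eq_of_lt (by omega)]
    exact hst
  rw [Pmin, Pmin]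
  have key : ∀ j ∈ Finset.Icc (n - i + 1) k,
      Mmin n hn i j (u⁻¹ * X * u) * Nmin n hn j k (u⁻¹ * X * u)
        = ∑ c ∈ Finset.Icc (n - i + 1) k, ∑ b ∈ Finset.Icc (n - i + 1) k,
            (u (fidx n hn (c - 1)) (fidx n hn (j - 1))
              * u⁻¹ (fidx n hn (j - 1)) (fidx n hn (b - 1))) * (M c * N b) := by
    intro j hj
    rw [Finset.mem_Icc] at hj
    have hjn : j ≤ n := le_trans hj.2 hkn
    have hMpart : Mmin n hn i j (u⁻¹ * X * u)
        = ∑ c ∈ Finset.Icc (n - i + 1) k,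
            u (fidx n hn (c - 1)) (fidx n hn (j - 1)) * M c := by
      rw [Mmin_mul_right hn hi hin hj.1 hjn (u⁻¹ * X) u hu]
      rw [Finset.sum_congr rfl (fun c hc => ?_),
        Finset.sum_subset (Finset.Icc_subset_Icc_right hj.2) (fun c hc hc' => ?_)]
      · rw [Finset.mem_Icc] at hc hc'
        have hjc : j < c := by
          by_contra hcon
          exact hc' ⟨hc.1, by omega⟩
        rw [hu.2 _ _ (hflt (by omega) (by omega)), zero_mul]
      · rw [Finset.mem_Icc] at hc
        rw [Mmin_mul_left hn hi hin (by omega : 1 ≤ c) (by omega : c ≤ n) u⁻¹ X hw]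
    have hNpart : Nmin n hn j k (u⁻¹ * X * u)
        = ∑ b ∈ Finset.Icc (n - i + 1) k,
            u⁻¹ (fidx n hn (j - 1)) (fidx n hn (b - 1)) * N b := by
      rw [mul_assoc, Nmin_mul_left hn (by omega : 1 ≤ j) hj.2 hkn u⁻¹ (X * u) hw]
      rw [Finset.sum_congr rfl (fun b hb => ?_),
        Finset.sum_subset (Finset.Icc_subset_Icc_left hj.1) (fun b hb hb' => ?_)]
      · rw [Finset.mem_Icc] at hb hb'
        have hbj : b < j := by
          by_contra hcon
          exact hb' ⟨by omega, hb.2⟩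
        rw [hw.2 _ _ (hflt (by omega) (by omega)), zero_mul]
      · rw [Finset.mem_Icc] at hb
        rw [Nmin_mul_right hn (by omega : 1 ≤ b) (by omega : b ≤ n) hk1 hkn X u hu]
    rw [hMpart, hNpart, Finset.sum_mul_sum]
    refine Finset.sum_congr rfl (fun c _ => Finset.sum_congr rfl (fun b _ => by ring))
  rw [Finset.sum_congr rfl key, Finset.sum_comm]
  rw [Finset.sum_congr rfl (fun c _ => Finset.sum_comm)]
  have delta : ∀ c ∈ Finset.Icc (n - i + 1) k, ∀ b ∈ Finset.Icc (n - i + 1) k,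
      ∑ j ∈ Finset.Icc (n - i + 1) k,
        u (fidx n hn (c - 1)) (fidx n hn (j - 1)) * u⁻¹ (fidx n hn (j - 1)) (fidx n hn (b - 1))
      = if c = b then 1 else 0 := by
    intro c hc b hb
    rw [Finset.mem_Icc] at hc hb
    have step1 : ∑ j ∈ Finset.Icc (n - i + 1) k,
        u (fidx n hn (c - 1)) (fidx n hn (j - 1)) * u⁻¹ (fidx n hn (j - 1)) (fidx n hn (b - 1))
        = ∑ s ∈ Finset.Ico (n - i) k,
        u (fidx n hn (c - 1)) (fidx n hn s) * u⁻¹ (fidx n hn s) (fidx n hn (b - 1)) := by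
      refine Finset.sum_bij' (fun j _ => j - 1) (fun s _ => s + 1) ?_ ?_ ?_ ?_ ?_
      · intro j hj
        simp only [Finset.mem_Icc] at hj
        simp only [Finset.mem_Ico]
        omega
      · intro s hs
        simp only [Finset.mem_Ico] at hs
        simp only [Finset.mem_Icc]
        omega
      · intro j hj
        simp only [Finset.mem_Icc] at hj
        show j - 1 + 1 = j
        omega
      · intro s hs
        show s + 1 - 1 = s
        omega
      · intro j hj
        rfl
    have step2 : ∑ s ∈ Finset.Ico (n - i) k,
        u (fidx n hn (c - 1)) (fidx n hn s) * u⁻¹ (fidx n hn s) (fidx n hn (b - 1))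
        = ∑ s ∈ Finset.range n,
        u (fidx n hn (c - 1)) (fidx n hn s) * u⁻¹ (fidx n hn s) (fidx n hn (b - 1)) := by
      rw [Finset.range_eq_Ico]
      refine Finset.sum_subset (Finset.Ico_subset_Ico (by omega) hkn) (fun s hs hs' => ?_)
      rw [Finset.mem_Ico] at hs
      rw [Finset.mem_Ico] at hs'
      rcases lt_or_ge s (n - i) with h | h
      · rw [hu.2 _ _ (hflt (by omega) (by omega)), zero_mul]
      · have hsk : k ≤ s := by omega
        rw [hw.2 _ _ (hflt (by omega) (by omega)), mul_zero]
    rw [step1, step2, ← sum_fin_eq_range hn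
      (fun t => u (fidx n hn (c - 1)) t * u⁻¹ t (fidx n hn (b - 1))), ← Matrix.mul_apply,
      hOne, Matrix.one_apply]
    by_cases hcb : c = b
    · rw [if_pos, if_pos hcb]
      rw [hcb]
    · rw [if_neg, if_neg hcb]
      intro hcon
      apply hcb
      have h1 : (fidx n hn (c - 1)).1 = c - 1 := Nat.mod_eq_of_lt (by omega)
      have h2 : (fidx n hn (b - 1)).1 = b - 1 := Nat.mod_eq_of_lt (by omega)
      have := congrArg Fin.val hcon
      rw [h1, h2] at this
      omega
  refine Finset.sum_congr rfl (fun c hc => ?_)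
  have inner : ∀ b ∈ Finset.Icc (n - i + 1) k,
      (∑ j ∈ Finset.Icc (n - i + 1) k,
        (u (fidx n hn (c - 1)) (fidx n hn (j - 1))
          * u⁻¹ (fidx n hn (j - 1)) (fidx n hn (b - 1))) * (M c * N b))
      = if c = b then M c * N b else 0 := by
    intro b hb
    rw [← Finset.sum_mul, delta c hc b hb]
    by_cases hcb : c = b
    · rw [if_pos hcb, if_pos hcb, one_mul]
    · rw [if_neg hcb, if_neg hcb, zero_mul]
  rw [Finset.sum_congr rfl inner, Finset.sum_ite_eq (Finset.Icc (n - i + 1) k) c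
    (fun b => M c * N b)]
  rw [if_pos hc]
end

section
/- Let π : K[Mat(n)]^{UT(n)} → K[𝒮] be the restriction of UT(n)-invariant polynomial functions on Mat(n) (for the conjugation action) to the anti-triangular subspace 𝒮. Then π is injective. -/
open Matrix BigOperators

section helpers
variable {K : Type*} [Field K]

lemma sum_castLE_aux {M : Type*} [AddCommMonoid M] {m k : ℕ} (h : k ≤ m) (f : Fin m → M)
    (hf : ∀ l : Fin m, k ≤ l.val → f l = 0) :
    ∑ l : Fin m, f l = ∑ l : Fin k, f (Fin.castLE h l) := by
  have h1 : ∑ l : Fin k, f (Fin.castLE h l)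
      = ∑ l ∈ Finset.univ.map (Fin.castLEEmb h), f l := by
    rw [Finset.sum_map]; rfl
  rw [h1]
  symm
  apply Finset.sum_subset (Finset.subset_univ _)
  intro x _ hx
  apply hf
  by_contra hc
  push_neg at hc
  exact hx (Finset.mem_map.mpr ⟨⟨x.val, hc⟩, Finset.mem_univ _, Fin.ext rfl⟩)

lemma submatrix_mul_castLE {m k : ℕ} (h : k ≤ m) (F B : Matrix (Fin m) (Fin m) K)
    (hF : ∀ i j : Fin m, i < j → F i j = 0) :
    (F * B).submatrix (Fin.castLE h) (Fin.castLE h)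
      = F.submatrix (Fin.castLE h) (Fin.castLE h) * B.submatrix (Fin.castLE h) (Fin.castLE h) := by
  ext a b
  simp only [submatrix_apply, Matrix.mul_apply]
  rw [sum_castLE_aux h (fun l => F (Fin.castLE h a) l * B l (Fin.castLE h b))]
  intro l hl
  have hlt : Fin.castLE h a < l := by
    have : (a : ℕ) < k := a.isLt
    exact Fin.lt_def.mpr (by simp; omega)
  rw [hF _ _ hlt, zero_mul]

lemma lower_unitri_mul {m : ℕ} (A B : Matrix (Fin m) (Fin m) K)
    (hA1 : ∀ i, A i i = 1) (hA0 : ∀ i j : Fin m, i < j → A i j = 0)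
    (hB1 : ∀ i, B i i = 1) (hB0 : ∀ i j : Fin m, i < j → B i j = 0) :
    (∀ i, (A * B) i i = 1) ∧ (∀ i j : Fin m, i < j → (A * B) i j = 0) := by
  constructor
  · intro i
    rw [Matrix.mul_apply, Finset.sum_eq_single i]
    · rw [hA1, hB1, one_mul]
    · intro l _ hl
      rcases lt_or_gt_of_ne hl with hlt | hlt
      · rw [hB0 _ _ hlt, mul_zero]
      · rw [hA0 _ _ hlt, zero_mul]
    · intro habs; exact absurd (Finset.mem_univ i) habs
  · intro i j hij
    rw [Matrix.mul_apply]
    apply Finset.sum_eq_zero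
    intro l _
    rcases lt_or_ge i l with hlt | hle
    · rw [hA0 _ _ hlt, zero_mul]
    · rw [hB0 _ _ (lt_of_le_of_lt hle hij), mul_zero]

lemma det_submatrix_lower_unitri {m k : ℕ} (h : k ≤ m) (F : Matrix (Fin m) (Fin m) K)
    (hF1 : ∀ i, F i i = 1) (hF0 : ∀ i j : Fin m, i < j → F i j = 0) :
    (F.submatrix (Fin.castLE h) (Fin.castLE h)).det = 1 := by
  have htri : (F.submatrix (Fin.castLE h) (Fin.castLE h)).BlockTriangular OrderDual.toDual := by
    intro i j hij
    have h2 : (i : ℕ) < (j : ℕ) := hij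
    exact hF0 _ _ (Fin.lt_def.mpr (by simpa using h2))
  rw [Matrix.det_of_lowerTriangular _ htri]
  exact Finset.prod_eq_one (fun i _ => hF1 _)

lemma lu_exists {K : Type*} [Field K] :
    ∀ (m : ℕ) (B : Matrix (Fin m) (Fin m) K),
    (∀ (k : ℕ) (hk : k < m), (B.submatrix (Fin.castLE hk) (Fin.castLE hk)).det ≠ 0) →
    ∃ l U : Matrix (Fin m) (Fin m) K,
      (∀ i, l i i = 1) ∧ (∀ i j : Fin m, i < j → l i j = 0) ∧
      (∀ i j : Fin m, j < i → U i j = 0) ∧ B = l * U := by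
  intro m
  induction m with
  | zero =>
    intro B _
    exact ⟨1, B, fun i => i.elim0, fun i j => i.elim0, fun i j => i.elim0, (one_mul B).symm⟩
  | succ m IH =>
    intro B hmin
    have hp : B 0 0 ≠ 0 := by
      have h0 := hmin 0 (Nat.succ_pos m)
      rwa [Matrix.det_fin_one] at h0
    set p := B 0 0 with hpdef
    set c : Fin (m+1) → K := fun i => B i 0 / p with hc
    set B' : Matrix (Fin (m+1)) (Fin (m+1)) K :=
      Matrix.of (fun i j => if i = 0 then B i j else B i j - c i * B 0 j) with hB'
    set F : Matrix (Fin (m+1)) (Fin (m+1)) K :=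
      Matrix.of (fun i j => if i = j then (1:K) else if j = 0 then c i else 0) with hF
    have hF1 : ∀ i, F i i = 1 := fun i => by simp [hF]
    have hF0 : ∀ i j : Fin (m+1), i < j → F i j = 0 := by
      intro i j hij
      have h1 : i ≠ j := ne_of_lt hij
      have h2 : j ≠ 0 := by
        intro hj0; rw [hj0] at hij; exact absurd hij (Fin.not_lt_zero i)
      simp [hF, h1, h2]
    have hB'0 : ∀ j, B' 0 j = B 0 j := fun j => by simp [hB']
    have hB'col : ∀ i : Fin (m+1), i ≠ 0 → B' i 0 = 0 := by
      intro i hi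
      simp only [hB', Matrix.of_apply, if_neg hi, hc]
      field_simp
      rw [← hpdef]; ring
    have hFB' : B = F * B' := by
      ext i j
      rw [Matrix.mul_apply, Fin.sum_univ_succ]
      by_cases hi : i = 0
      · subst hi
        have : ∀ l : Fin m, F 0 l.succ * B' l.succ j = 0 := by
          intro l
          have h1 : (0 : Fin (m+1)) ≠ l.succ := (Fin.succ_ne_zero l).symm
          simp [hF, h1, (Fin.succ_ne_zero l)]
        rw [Finset.sum_congr rfl (fun l _ => this l), Finset.sum_const_zero]
        simp [hF, hB'0]
      · have hF00 : F i 0 = c i := by simp [hF, hi]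
        have hsum : ∑ l : Fin m, F i l.succ * B' l.succ j
            = ∑ l : Fin m, (if l = i.pred hi then B' i j else 0) := by
          apply Finset.sum_congr rfl
          intro l _
          by_cases hl : l = i.pred hi
          · subst hl
            simp [hF, Fin.succ_pred]
          · have hne : i ≠ l.succ := by
              intro hcon
              apply hl
              apply Fin.ext
              have h1 := congrArg Fin.val hcon
              simp only [Fin.val_succ] at h1
              simp [Fin.coe_pred, h1]
            simp [hF, hne, (Fin.succ_ne_zero l), hl]
        rw [hsum, Finset.sum_ite_eq' Finset.univ, if_pos (Finset.mem_univ _)]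
        rw [hF00, hB'0]
        simp only [hB', Matrix.of_apply, if_neg hi]
        ring
    set C : Matrix (Fin m) (Fin m) K := Matrix.of (fun i j => B' i.succ j.succ) with hC
    have castLE_succ : ∀ {k : ℕ} (hk2 : k + 2 ≤ m + 1) (hk1 : k + 1 ≤ m) (a : Fin (k+1)),
        Fin.castLE hk2 a.succ = (Fin.castLE hk1 a).succ := by
      intro k hk2 hk1 a; exact Fin.ext rfl
    have hCmin : ∀ (k : ℕ) (hk : k < m),
        ((C.submatrix (Fin.castLE hk) (Fin.castLE hk)).det) ≠ 0 := by
      intro k hk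
      have hk1 : k + 1 < m + 1 := Nat.succ_lt_succ hk
      have hBdet := hmin (k+1) hk1
      have hsplit : B.submatrix (Fin.castLE hk1) (Fin.castLE hk1)
          = F.submatrix (Fin.castLE hk1) (Fin.castLE hk1)
            * B'.submatrix (Fin.castLE hk1) (Fin.castLE hk1) := by
        rw [← submatrix_mul_castLE _ F B' hF0, ← hFB']
      have hdetB' : (B'.submatrix (Fin.castLE hk1) (Fin.castLE hk1)).det
          = (B.submatrix (Fin.castLE hk1) (Fin.castLE hk1)).det := by
        rw [hsplit, Matrix.det_mul, det_submatrix_lower_unitri _ F hF1 hF0, one_mul]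
      set M : Matrix (Fin (k+2)) (Fin (k+2)) K :=
        B'.submatrix (Fin.castLE hk1) (Fin.castLE hk1) with hM
      have hMcol : ∀ i : Fin (k+1), M i.succ 0 = 0 := by
        intro i
        have : Fin.castLE hk1 i.succ ≠ 0 := by
          intro hcon
          have : (i.succ : ℕ) = 0 := congrArg Fin.val hcon
          simp at this
        simp only [hM, Matrix.submatrix_apply]
        have h0 : Fin.castLE hk1 (0 : Fin (k+2)) = 0 := Fin.ext rfl
        rw [h0]
        exact hB'col _ this
      have hexp : M.det = M 0 0 * (M.submatrix Fin.succ Fin.succ).det := by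
        rw [Matrix.det_succ_column_zero, Fin.sum_univ_succ]
        have hz : ∀ i : Fin (k+1),
            (-1:K) ^ ((i.succ : Fin (k+2)) : ℕ) * M i.succ 0
              * (M.submatrix i.succ.succAbove Fin.succ).det = 0 := by
          intro i; rw [hMcol i]; ring
        rw [Finset.sum_congr rfl (fun i _ => hz i), Finset.sum_const_zero]
        simp [Fin.succAbove_zero]
      have hMsub : M.submatrix Fin.succ Fin.succ
          = C.submatrix (Fin.castLE hk) (Fin.castLE hk) := by
        ext a b
        simp only [hM, hC, Matrix.submatrix_apply, Matrix.of_apply]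
        rw [castLE_succ hk1 hk a, castLE_succ hk1 hk b]
      have hM00 : M 0 0 = p := by
        simp only [hM, Matrix.submatrix_apply]
        have h0 : Fin.castLE hk1 (0 : Fin (k+2)) = 0 := Fin.ext rfl
        rw [h0, hB'0]
      have : M.det ≠ 0 := by rw [hM, hdetB']; exact hBdet
      rw [hexp, hMsub, hM00] at this
      exact fun hcon => this (by rw [hcon, mul_zero])
    obtain ⟨l', U', hl'1, hl'0, hU', hCLU⟩ := IH C hCmin
    set L2 : Matrix (Fin (m+1)) (Fin (m+1)) K :=
      Matrix.of (fun i j => if h1 : i = 0 then (if j = 0 then (1:K) else 0)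
        else if h2 : j = 0 then 0 else l' (i.pred h1) (j.pred h2)) with hL2
    set U2 : Matrix (Fin (m+1)) (Fin (m+1)) K :=
      Matrix.of (fun i j => if h1 : i = 0 then B' 0 j
        else if h2 : j = 0 then 0 else U' (i.pred h1) (j.pred h2)) with hU2
    have hB'LU : B' = L2 * U2 := by
      ext i j
      rw [Matrix.mul_apply, Fin.sum_univ_succ]
      by_cases hi : i = 0
      · subst hi
        have hz : ∀ l : Fin m, L2 (0:Fin (m+1)) l.succ * U2 l.succ j = 0 := by
          intro l
          simp [hL2, (Fin.succ_ne_zero l)]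
        rw [Finset.sum_congr rfl (fun l _ => hz l), Finset.sum_const_zero]
        simp [hL2, hU2]
      · have hL20 : L2 i 0 = 0 := by simp [hL2, hi]
        have hterm : ∀ l : Fin m, L2 i l.succ * U2 l.succ j
            = l' (i.pred hi) l * U2 l.succ j := by
          intro l
          congr 1
          simp [hL2, hi, (Fin.succ_ne_zero l), Fin.pred_succ]
        rw [hL20, zero_mul, zero_add, Finset.sum_congr rfl (fun l _ => hterm l)]
        by_cases hj : j = 0
        · subst hj
          have : ∀ l : Fin m, l' (i.pred hi) l * U2 l.succ 0 = 0 := by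
            intro l; simp [hU2, (Fin.succ_ne_zero l)]
          rw [Finset.sum_congr rfl (fun l _ => this l), Finset.sum_const_zero]
          exact hB'col i hi
        · have : ∀ l : Fin m, l' (i.pred hi) l * U2 l.succ j
              = l' (i.pred hi) l * U' l (j.pred hj) := by
            intro l; congr 1; simp [hU2, (Fin.succ_ne_zero l), hj, Fin.pred_succ]
          rw [Finset.sum_congr rfl (fun l _ => this l)]
          have : ∑ l : Fin m, l' (i.pred hi) l * U' l (j.pred hj)
              = C (i.pred hi) (j.pred hj) := by
            rw [hCLU]; rw [Matrix.mul_apply]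
          rw [this]
          simp only [hC, Matrix.of_apply, Fin.succ_pred]
    have hL21 : ∀ i, L2 i i = 1 := by
      intro i
      by_cases hi : i = 0
      · subst hi; simp [hL2]
      · simp [hL2, hi, hl'1]
    have hL20 : ∀ i j : Fin (m+1), i < j → L2 i j = 0 := by
      intro i j hij
      have hj : j ≠ 0 := by
        intro hj0; rw [hj0] at hij; exact absurd hij (Fin.not_lt_zero i)
      by_cases hi : i = 0
      · simp [hL2, hi, hj]
      · have : i.pred hi < j.pred hj := by
          rw [Fin.pred_lt_pred_iff]; exact hij
        simp [hL2, hi, hj, hl'0 _ _ this]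
    have hU2tri : ∀ i j : Fin (m+1), j < i → U2 i j = 0 := by
      intro i j hij
      have hi : i ≠ 0 := by
        intro hi0; rw [hi0] at hij; exact absurd hij (Fin.not_lt_zero j)
      by_cases hj : j = 0
      · simp [hU2, hi, hj]
      · have : j.pred hj < i.pred hi := by
          rw [Fin.pred_lt_pred_iff]; exact hij
        simp [hU2, hi, hj, hU' _ _ this]
    obtain ⟨hfl1, hfl0⟩ := lower_unitri_mul F L2 hF1 hF0 hL21 hL20
    exact ⟨F * L2, U2, hfl1, hfl0, hU2tri, by rw [hFB', hB'LU, Matrix.mul_assoc]⟩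

end helpers

lemma generic_decomp {K : Type*} [Field K] {n : ℕ} (X : Matrix (Fin n) (Fin n) K)
    (hX : ∀ (k : ℕ) (hk : k < n),
      (((Matrix.of fun i j : Fin n => X (Fin.rev i) j)).submatrix
        (Fin.castLE hk) (Fin.castLE hk)).det ≠ 0) :
    ∃ (u S : Matrix (Fin n) (Fin n) K), IsUnitriangular u ∧
      (∀ a b : Fin n, a.val + b.val + 2 ≤ n → S a b = 0) ∧ X = u * S * u⁻¹ := by
  obtain ⟨l, U, hl1, hl0, hU, hB⟩ := lu_exists n (Matrix.of fun i j => X (Fin.rev i) j) hX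
  set u : Matrix (Fin n) (Fin n) K := Matrix.of (fun i j => l (Fin.rev i) (Fin.rev j)) with hu
  have huni : IsUnitriangular u := by
    constructor
    · intro i; exact hl1 _
    · intro i j hji
      exact hl0 _ _ (by rwa [Fin.rev_lt_rev])
  set T : Matrix (Fin n) (Fin n) K := U * u with hT
  have hTtri : ∀ i j : Fin n, j < i → T i j = 0 := by
    intro i j hij
    rw [hT, Matrix.mul_apply]
    apply Finset.sum_eq_zero
    intro x _
    rcases lt_or_ge x i with hlt | hle
    · rw [hU _ _ hlt, zero_mul]
    · rw [huni.2 _ _ (lt_of_lt_of_le hij hle), mul_zero]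
  set S : Matrix (Fin n) (Fin n) K := Matrix.of (fun a b => T (Fin.rev a) b) with hS
  have hSanti : ∀ a b : Fin n, a.val + b.val + 2 ≤ n → S a b = 0 := by
    intro a b hab
    show T (Fin.rev a) b = 0
    apply hTtri
    rw [Fin.lt_def, Fin.val_rev]
    omega
  have hXu : X * u = u * S := by
    ext i j
    have lhs : (X * u) i j = ((l * U) * u) (Fin.rev i) j := by
      rw [← hB, Matrix.mul_apply, Matrix.mul_apply]
      apply Finset.sum_congr rfl
      intro c _
      congr 1
      show X i c = X (Fin.rev (Fin.rev i)) c
      rw [Fin.rev_rev]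
    have rhs : (u * S) i j = (l * (U * u)) (Fin.rev i) j := by
      rw [Matrix.mul_apply, Matrix.mul_apply]
      rw [← Equiv.sum_comp (Fin.revPerm) (fun d => l (Fin.rev i) d * (U * u) d j)]
      apply Finset.sum_congr rfl
      intro c _
      rfl
    rw [lhs, rhs, Matrix.mul_assoc]
  have hdetu : u.det = 1 := by
    have htri : u.BlockTriangular id := fun i j hij => huni.2 i j hij
    rw [Matrix.det_of_upperTriangular htri]
    exact Finset.prod_eq_one (fun i _ => huni.1 i)
  have hinv : u * u⁻¹ = 1 := Matrix.mul_nonsing_inv u (by rw [hdetu]; exact isUnit_one)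
  refine ⟨u, S, huni, hSanti, ?_⟩
  calc X = X * (u * u⁻¹) := by rw [hinv, Matrix.mul_one]
    _ = (X * u) * u⁻¹ := by rw [Matrix.mul_assoc]
    _ = u * S * u⁻¹ := by rw [hXu]

/-- the restriction map `π : K[Mat(n)]^{UT(n)} → K[𝒮]` of unitriangular
conjugation invariants to the anti-triangular subspace `𝒮` is injective. -/
theorem restriction_to_antitriangular_injective {K : Type*} [Field K] [Infinite K]
    (n : ℕ) (hn : 0 < n)
    (f g : MvPolynomial (Fin n × Fin n) K)
    (hf : ∀ u X : Matrix (Fin n) (Fin n) K, IsUnitriangular u →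
      MvPolynomial.eval (fun p => (u * X * u⁻¹) p.1 p.2) f =
        MvPolynomial.eval (fun p => X p.1 p.2) f)
    (hg : ∀ u X : Matrix (Fin n) (Fin n) K, IsUnitriangular u →
      MvPolynomial.eval (fun p => (u * X * u⁻¹) p.1 p.2) g =
        MvPolynomial.eval (fun p => X p.1 p.2) g)
    (hfg : ∀ S : Matrix (Fin n) (Fin n) K,
      (∀ a b : Fin n, a.val + b.val + 2 ≤ n → S a b = 0) →
      MvPolynomial.eval (fun p => S p.1 p.2) f =
        MvPolynomial.eval (fun p => S p.1 p.2) g) :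
    f = g := by
  classical
  set q : MvPolynomial (Fin n × Fin n) K :=
    ∏ k : Fin n, (Matrix.of fun a b : Fin (k.val + 1) =>
      MvPolynomial.X (Fin.rev (Fin.castLE k.isLt a), Fin.castLE k.isLt b)).det with hq
  have hq0 : q ≠ 0 := by
    intro h0
    set x0 : (Fin n × Fin n) → K := fun p => if p.1 = Fin.rev p.2 then 1 else 0 with hx0
    have hq1 : MvPolynomial.eval x0 q = 1 := by
      rw [hq, map_prod]
      apply Finset.prod_eq_one
      intro k _
      rw [RingHom.map_det, RingHom.mapMatrix_apply]
      have hone : ((Matrix.of fun a b : Fin (k.val + 1) =>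
          MvPolynomial.X (R := K) (Fin.rev (Fin.castLE k.isLt a), Fin.castLE k.isLt b)).map
            (MvPolynomial.eval x0)) = 1 := by
        ext a b
        simp only [Matrix.map_apply, Matrix.of_apply, MvPolynomial.eval_X, hx0]
        by_cases hab : a = b
        · subst hab; simp [Matrix.one_apply]
        · have h1 : Fin.rev (Fin.castLE k.isLt a) ≠ Fin.rev (Fin.castLE k.isLt b) := by
            simp only [ne_eq, Fin.rev_inj, Fin.castLE_inj]
            exact hab
          simp [h1, Matrix.one_apply, hab]
      rw [hone, Matrix.det_one]
    rw [h0, map_zero] at hq1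
    exact zero_ne_one hq1
  have hkey : ∀ x : (Fin n × Fin n) → K, MvPolynomial.eval x ((f - g) * q) = 0 := by
    intro x
    rw [_root_.map_mul, _root_.map_sub]
    set X : Matrix (Fin n) (Fin n) K := Matrix.of (fun i j => x (i, j)) with hXdef
    have hx : (fun p : Fin n × Fin n => X p.1 p.2) = x := by
      funext p; cases p; rfl
    have hentry : ∀ (k : Fin n),
        MvPolynomial.eval x ((Matrix.of fun a b : Fin (k.val + 1) =>
          MvPolynomial.X (R := K) (Fin.rev (Fin.castLE k.isLt a), Fin.castLE k.isLt b)).det)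
        = (((Matrix.of fun i j : Fin n => X (Fin.rev i) j)).submatrix
            (Fin.castLE k.isLt) (Fin.castLE k.isLt)).det := by
      intro k
      rw [RingHom.map_det, RingHom.mapMatrix_apply]
      congr 1
      ext a b
      simp only [Matrix.map_apply, Matrix.of_apply, MvPolynomial.eval_X, Matrix.submatrix_apply]
      rfl
    by_cases hcase : ∀ (k : ℕ) (hk : k < n),
        (((Matrix.of fun i j : Fin n => X (Fin.rev i) j)).submatrix
          (Fin.castLE hk) (Fin.castLE hk)).det ≠ 0
    · obtain ⟨u, S, hu, hS, hXS⟩ := generic_decomp X hcase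
      have e1 : MvPolynomial.eval x f = MvPolynomial.eval (fun p : Fin n × Fin n => S p.1 p.2) f := by
        rw [← hx, hXS]; exact hf u S hu
      have e2 : MvPolynomial.eval x g = MvPolynomial.eval (fun p : Fin n × Fin n => S p.1 p.2) g := by
        rw [← hx, hXS]; exact hg u S hu
      rw [e1, e2, hfg S hS, sub_self, zero_mul]
    · push_neg at hcase
      obtain ⟨k, hk, hdet⟩ := hcase
      have hqx : MvPolynomial.eval x q = 0 := by
        rw [hq, map_prod]
        apply Finset.prod_eq_zero (Finset.mem_univ (⟨k, hk⟩ : Fin n))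
        rw [hentry ⟨k, hk⟩]
        exact hdet
      rw [hqx, mul_zero]
  have hzero : (f - g) * q = 0 := by
    apply MvPolynomial.funext
    intro x
    rw [hkey x, map_zero]
  rcases mul_eq_zero.mp hzero with h | h
  · exact sub_eq_zero.mp h
  · exact absurd h hq0
end
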